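/- For every fixed nonnegative integer b, the quantity Λ(a,b) := ∑_{j=1}^{b} κ_{j+a−1} · (b − 1 + κ_{j−1} + κ_{b−j} − κ_b) tends to 0 as a → ∞. -/

import Mathlib

open Finset Filter Topology

/-- The `n`-th harmonic number `H_n = ∑_{i=1}^n 1/i`. -/
noncomputable def H (n : ℕ) : ℝ := ∑ i ∈ Finset.range n, (1 : ℝ) / (i + 1)

/-- `κ_n = 2(n+1)H_n - 4n`, the mean number of key comparisons for QuickSort on `n` keys. -/
noncomputable def κ (n : ℕ) : ℝ := 2 * (n + 1) * H n - 4 * n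

lemma H_succ (n : ℕ) : H (n + 1) = H n + 1 / (n + 1) := by
  simp [H, Finset.sum_range_succ]

lemma kappa_diff (n : ℕ) : κ (n + 1) = κ n + (2 * H (n + 1) - 2) := by
  have hn : (n : ℝ) + 1 ≠ 0 := by positivity
  simp only [κ, H_succ]
  push_cast
  field_simp
  ring

lemma kappa_rec (n : ℕ) : ((n : ℝ) + 1) * κ (n + 1) = ((n : ℝ) + 2) * κ n + 2 * n := by
  have hn : (n : ℝ) + 1 ≠ 0 := by positivity
  simp only [κ, H_succ]
  push_cast
  field_simp
  ring

lemma sum_kappa (b : ℕ) : 2 * ∑ i ∈ Finset.range b, κ i = b * κ b - b * ((b : ℝ) - 1) := by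
  induction b with
  | zero => simp [κ, H]
  | succ n ih =>
    rw [Finset.sum_range_succ]
    have h := kappa_rec n
    push_cast
    nlinarith [h, ih]

lemma Hdiff (i : ℕ) : Tendsto (fun a : ℕ => H (i + a + 1) - H (a + 1)) atTop (𝓝 0) := by
  induction i with
  | zero => simpa using tendsto_const_nhds
  | succ n ih =>
    have h1 : Tendsto (fun a : ℕ => (1 : ℝ) / ((a : ℝ) + (n + 2))) atTop (𝓝 0) := by
      have := (tendsto_one_div_add_atTop_nhds_zero_nat (𝕜 := ℝ)).comp (tendsto_add_atTop_nat (n + 1))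
      convert this using 2 with a
      simp only [Function.comp]
      push_cast
      ring
    have := ih.add h1
    rw [add_zero] at this
    convert this using 2 with a
    have : n + 1 + a + 1 = (n + a + 1) + 1 := by omega
    rw [this, H_succ]
    push_cast
    ring

lemma Dlem (i : ℕ) :
    Tendsto (fun a : ℕ => κ (i + a) - κ a - (i : ℝ) * (2 * H (a + 1) - 2)) atTop (𝓝 0) := by
  induction i with
  | zero => simpa using tendsto_const_nhds
  | succ n ih =>
    have h2 := (Hdiff n).const_mul (2 : ℝ)
    have := ih.add h2
    rw [mul_zero, add_zero] at this
    convert this using 2 with a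
    have e : n + 1 + a = (n + a) + 1 := by omega
    rw [e, kappa_diff (n + a)]
    push_cast
    ring_nf

lemma M0 (b : ℕ) : ∑ i ∈ Finset.range b, ((b : ℝ) - 1 + κ i + κ (b - 1 - i) - κ b) = 0 := by
  have hrefl := Finset.sum_range_reflect (fun i => κ i) b
  have hsum := sum_kappa b
  simp only [Finset.sum_sub_distrib, Finset.sum_add_distrib, Finset.sum_const,
    Finset.card_range, nsmul_eq_mul] at *
  rw [hrefl]
  linarith

lemma gauss (b : ℕ) : ∑ i ∈ Finset.range b, (i : ℝ) = b * ((b : ℝ) - 1) / 2 := by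
  induction b with
  | zero => simp
  | succ n ih => rw [Finset.sum_range_succ, ih]; push_cast; ring

lemma M1 (b : ℕ) :
    ∑ i ∈ Finset.range b, (i : ℝ) * ((b : ℝ) - 1 + κ i + κ (b - 1 - i) - κ b) = 0 := by
  have hrefl : ∑ i ∈ Finset.range b, (i : ℝ) * κ (b - 1 - i)
      = ∑ i ∈ Finset.range b, ((b : ℝ) - 1 - i) * κ i := by
    rw [← Finset.sum_range_reflect (fun i => (i : ℝ) * κ (b - 1 - i)) b]
    apply Finset.sum_congr rfl
    intro j hj
    have hjb : j < b := Finset.mem_range.mp hj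
    have e1 : b - 1 - (b - 1 - j) = j := by omega
    have e2 : ((b - 1 - j : ℕ) : ℝ) = (b : ℝ) - 1 - j := by
      have : (b - 1 - j : ℕ) = b - (1 + j) := by omega
      rw [this, Nat.cast_sub (by omega)]
      push_cast; ring
    rw [e1, e2]
  have hgauss := gauss b
  have hsum := sum_kappa b
  have expand : ∑ i ∈ Finset.range b, (i : ℝ) * ((b : ℝ) - 1 + κ i + κ (b - 1 - i) - κ b)
      = ((b : ℝ) - 1 - κ b) * (∑ i ∈ Finset.range b, (i : ℝ))
        + (∑ i ∈ Finset.range b, (i : ℝ) * κ i)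
        + (∑ i ∈ Finset.range b, (i : ℝ) * κ (b - 1 - i)) := by
    rw [Finset.mul_sum, ← Finset.sum_add_distrib, ← Finset.sum_add_distrib]
    exact Finset.sum_congr rfl (fun i _ => by ring)
  have combine : (∑ i ∈ Finset.range b, (i : ℝ) * κ i)
      + (∑ i ∈ Finset.range b, ((b : ℝ) - 1 - i) * κ i)
      = ((b : ℝ) - 1) * ∑ i ∈ Finset.range b, κ i := by
    rw [Finset.mul_sum, ← Finset.sum_add_distrib]
    exact Finset.sum_congr rfl (fun i _ => by ring)
  rw [expand, hrefl, hgauss]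
  nlinarith [hsum, combine]

theorem lambda_tendsto_zero (b : ℕ) :
    Filter.Tendsto
      (fun a : ℕ => ∑ j ∈ Finset.Icc 1 b,
        κ (j + a - 1) * ((b : ℝ) - 1 + κ (j - 1) + κ (b - j) - κ b))
      Filter.atTop (𝓝 0) := by
  have key : ∀ a : ℕ, (∑ j ∈ Finset.Icc 1 b,
        κ (j + a - 1) * ((b : ℝ) - 1 + κ (j - 1) + κ (b - j) - κ b))
      = ∑ i ∈ Finset.range b, κ (i + a) * ((b : ℝ) - 1 + κ i + κ (b - 1 - i) - κ b) := by
    intro a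
    rw [← Finset.Ico_add_one_right_eq_Icc, Finset.sum_Ico_eq_sum_range]
    apply Finset.sum_congr rfl
    intro i hi
    have hib : i < b := Finset.mem_range.mp hi
    have e1 : 1 + i + a - 1 = i + a := by omega
    have e2 : 1 + i - 1 = i := by omega
    have e3 : b - (1 + i) = b - 1 - i := by omega
    rw [e1, e2, e3]
  have eq2 : ∀ a : ℕ, (∑ i ∈ Finset.range b, κ (i + a) * ((b : ℝ) - 1 + κ i + κ (b - 1 - i) - κ b))
      = ∑ i ∈ Finset.range b,
          (κ (i + a) - κ a - (i : ℝ) * (2 * H (a + 1) - 2))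
            * ((b : ℝ) - 1 + κ i + κ (b - 1 - i) - κ b) := by
    intro a
    have expand : ∑ i ∈ Finset.range b,
          (κ (i + a) - κ a - (i : ℝ) * (2 * H (a + 1) - 2))
            * ((b : ℝ) - 1 + κ i + κ (b - 1 - i) - κ b)
        = (∑ i ∈ Finset.range b, κ (i + a) * ((b : ℝ) - 1 + κ i + κ (b - 1 - i) - κ b))
          - κ a * ∑ i ∈ Finset.range b, ((b : ℝ) - 1 + κ i + κ (b - 1 - i) - κ b)
          - (2 * H (a + 1) - 2)
              * ∑ i ∈ Finset.range b, (i : ℝ) * ((b : ℝ) - 1 + κ i + κ (b - 1 - i) - κ b) := by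
      rw [Finset.mul_sum, Finset.mul_sum, ← Finset.sum_sub_distrib, ← Finset.sum_sub_distrib]
      exact Finset.sum_congr rfl (fun i _ => by ring)
    rw [expand, M0, M1]
    ring
  have main : Tendsto (fun a : ℕ => ∑ i ∈ Finset.range b,
      (κ (i + a) - κ a - (i : ℝ) * (2 * H (a + 1) - 2))
        * ((b : ℝ) - 1 + κ i + κ (b - 1 - i) - κ b)) atTop (𝓝 0) := by
    have := tendsto_finset_sum (Finset.range b)
      (fun i _ => (Dlem i).mul_const ((b : ℝ) - 1 + κ i + κ (b - 1 - i) - κ b))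
    simpa using this
  have heq : (fun a : ℕ => ∑ j ∈ Finset.Icc 1 b,
        κ (j + a - 1) * ((b : ℝ) - 1 + κ (j - 1) + κ (b - j) - κ b))
      = fun a : ℕ => ∑ i ∈ Finset.range b,
          (κ (i + a) - κ a - (i : ℝ) * (2 * H (a + 1) - 2))
            * ((b : ℝ) - 1 + κ i + κ (b - 1 - i) - κ b) :=
    funext fun a => (key a).trans (eq2 a)
  rw [heq]
  exact main
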